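/- For n ≥ 1, there is a bijection between the set M_{12,23}(n) of 3-tuples of lattice walks (L₁,L₂,L₃) of length n starting at heights 0, 2i, 2i+2j respectively (with steps ±1) such that L₂ intersects both L₁ and L₃, and the set M_{13}(n) of such 3-tuples in which L₁ intersects L₃. -/

import Mathlib

open PowerSeries Finset

/-- Generating function of the Catalan numbers `C_n = (1/(n+1))·binom(2n,n)`. -/
noncomputable def catGF : PowerSeries ℚ :=
  PowerSeries.mk fun n => (Nat.choose (2 * n) n : ℚ) / (n + 1)

/-- `D(t) = C(t) - 1`. -/
noncomputable def DGF : PowerSeries ℚ := catGF - 1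

/-- A lattice walk of length `n` with steps `±1`. -/
def IsWalk (n : ℕ) (L : Fin (n + 1) → ℤ) : Prop :=
  ∀ k : Fin n, |L k.succ - L k.castSucc| = 1

/-- Two walks intersect (share a common point at the same time). -/
def Meets {m : ℕ} (L L' : Fin m → ℤ) : Prop := ∃ k, L k = L' k

/-- All triples of walks of length `n` starting at heights `0, 2i, 2i+2j`. -/
def USet (i j n : ℕ) :
    Set ((Fin (n + 1) → ℤ) × (Fin (n + 1) → ℤ) × (Fin (n + 1) → ℤ)) :=
  {T | IsWalk n T.1 ∧ IsWalk n T.2.1 ∧ IsWalk n T.2.2 ∧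
    T.1 0 = 0 ∧ T.2.1 0 = 2 * i ∧ T.2.2 0 = 2 * i + 2 * j}

/-- Triples where `L₁` and `L₂` are nonintersecting. -/
def W12Set (i j n : ℕ) := {T ∈ USet i j n | ¬ Meets T.1 T.2.1}

/-- Triples where `L₂` and `L₃` are nonintersecting. -/
def W23Set (i j n : ℕ) := {T ∈ USet i j n | ¬ Meets T.2.1 T.2.2}

/-- Triples where `L₁` intersects `L₃`. -/
def M13Set (i j n : ℕ) := {T ∈ USet i j n | Meets T.1 T.2.2}

/-- Triples where `L₂` intersects both `L₁` and `L₃`. -/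
def M1223Set (i j n : ℕ) :=
  {T ∈ USet i j n | Meets T.2.1 T.1 ∧ Meets T.2.1 T.2.2}

/-- Vicious (pairwise nonintersecting) triples. -/
def VSet (i j n : ℕ) :=
  {T ∈ USet i j n | ¬ Meets T.1 T.2.1 ∧ ¬ Meets T.2.1 T.2.2 ∧ ¬ Meets T.1 T.2.2}

/-- Pairs of walks of length `n` starting at heights `0` and `2i`. -/
def PairSet (i n : ℕ) : Set ((Fin (n + 1) → ℤ) × (Fin (n + 1) → ℤ)) :=
  {P | IsWalk n P.1 ∧ IsWalk n P.2 ∧ P.1 0 = 0 ∧ P.2 0 = 2 * i}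

/-- Intersecting pairs. -/
def MSet (i n : ℕ) := {P ∈ PairSet i n | Meets P.1 P.2}

/-- Nonintersecting (vicious) pairs. -/
def NSet (i n : ℕ) := {P ∈ PairSet i n | ¬ Meets P.1 P.2}

/-- Converging pairs: never meet before time `n`, meet at time `n`. -/
def TSet (i n : ℕ) :=
  {P ∈ PairSet i n | (∀ k : Fin (n + 1), (k : ℕ) < n → P.1 k ≠ P.2 k) ∧
    P.1 (Fin.last n) = P.2 (Fin.last n)}

/-- 2-watermelons of length `n`. -/
def MelonSet (n : ℕ) : Set ((Fin (n + 1) → ℤ) × (Fin (n + 1) → ℤ)) :=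
  {P | IsWalk n P.1 ∧ IsWalk n P.2 ∧ P.1 0 = 0 ∧ P.2 0 = 2 ∧
    P.2 (Fin.last n) = P.1 (Fin.last n) + 2 ∧ ∀ k, P.1 k < P.2 k}

/-- Partial Dyck paths of length `2n` from height `2i` to `0`, strictly positive before the end. -/
def PDyckSet (i n : ℕ) : Set (Fin (2 * n + 1) → ℤ) :=
  {Q | IsWalk (2 * n) Q ∧ Q 0 = 2 * i ∧ Q (Fin.last (2 * n)) = 0 ∧
    ∀ k : Fin (2 * n + 1), (k : ℕ) < 2 * n → 0 < Q k}

section aux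
variable {n : ℕ}

instance {m : ℕ} (L L' : Fin m → ℤ) : Decidable (Meets L L') :=
  inferInstanceAs (Decidable (∃ k, L k = L' k))

lemma walk_step {L : Fin (n + 1) → ℤ} (hL : IsWalk n L) (k : Fin n) :
    L k.succ - L k.castSucc = 1 ∨ L k.succ - L k.castSucc = -1 := by
  have h := hL k
  rcases (abs_eq (by norm_num : (0:ℤ) ≤ 1)).mp h with h | h
  · exact Or.inl h
  · exact Or.inr h

noncomputable def fm (L L' : Fin (n + 1) → ℤ) (h : Meets L L') : Fin (n + 1) :=
  (Finset.univ.filter fun k => L k = L' k).min'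
    (by obtain ⟨k, hk⟩ := h; exact ⟨k, by simp [hk]⟩)

lemma fm_eq (L L' : Fin (n + 1) → ℤ) (h : Meets L L') :
    L (fm L L' h) = L' (fm L L' h) := by
  have := Finset.min'_mem (Finset.univ.filter fun k => L k = L' k)
    (by obtain ⟨k, hk⟩ := h; exact ⟨k, by simp [hk]⟩)
  simpa [fm] using this

lemma fm_le (L L' : Fin (n + 1) → ℤ) (h : Meets L L') {k} (hk : L k = L' k) :
    fm L L' h ≤ k :=
  Finset.min'_le _ _ (by simp [hk])

lemma fm_min (L L' : Fin (n + 1) → ℤ) (h : Meets L L') {k} (hk : k < fm L L' h) :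
    L k ≠ L' k :=
  fun he => absurd (fm_le L L' h he) (not_le.mpr hk)

lemma fm_unique (L L' : Fin (n + 1) → ℤ) (h : Meets L L') {a}
    (ha : L a = L' a) (hmin : ∀ k, k < a → L k ≠ L' k) :
    fm L L' h = a :=
  le_antisymm (fm_le L L' h ha)
    (not_lt.mp fun hlt => hmin _ hlt (fm_eq L L' h))

def sw (a : Fin (n + 1)) (L L' : Fin (n + 1) → ℤ) : Fin (n + 1) → ℤ :=
  fun k => if k ≤ a then L k else L' k

lemma sw_of_le {a k : Fin (n + 1)} (L L' : Fin (n + 1) → ℤ) (h : k ≤ a) :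
    sw a L L' k = L k := if_pos h

lemma sw_of_gt {a k : Fin (n + 1)} (L L' : Fin (n + 1) → ℤ) (h : a < k) :
    sw a L L' k = L' k := if_neg (not_le.mpr h)

lemma sw_zero (a : Fin (n + 1)) (L L' : Fin (n + 1) → ℤ) : sw a L L' 0 = L 0 :=
  sw_of_le L L' (Fin.zero_le a)

lemma sw_sw (a : Fin (n + 1)) (L L' : Fin (n + 1) → ℤ) :
    sw a (sw a L L') (sw a L' L) = L := by
  funext k
  by_cases h : k ≤ a <;> simp [sw, h]

lemma sw_walk {a : Fin (n + 1)} {L L' : Fin (n + 1) → ℤ}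
    (hL : IsWalk n L) (hL' : IsWalk n L') (ha : L a = L' a) :
    IsWalk n (sw a L L') := by
  intro k
  by_cases h1 : k.succ ≤ a
  · have h0 : k.castSucc ≤ a := le_trans (Fin.castSucc_le_succ k) h1
    rw [sw_of_le L L' h1, sw_of_le L L' h0]; exact hL k
  · push_neg at h1
    by_cases h0 : k.castSucc ≤ a
    · have hak : a = k.castSucc := by
        rw [Fin.lt_def] at h1
        rw [Fin.le_def] at h0
        refine Fin.ext ?_
        simp only [Fin.val_succ] at h1
        simp only [Fin.coe_castSucc] at h0 ⊢
        omega
      rw [sw_of_gt L L' h1, sw_of_le L L' h0]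
      have hc : L k.castSucc = L' k.castSucc := by rw [← hak]; exact ha
      rw [hc]; exact hL' k
    · push_neg at h0
      rw [sw_of_gt L L' h1, sw_of_gt L L' h0]; exact hL' k

lemma diff_pos {L L' : Fin (n + 1) → ℤ} (hL : IsWalk n L) (hL' : IsWalk n L')
    {m0 : ℤ} (h0 : L' 0 - L 0 = 2 * m0) (hm0 : 1 ≤ m0) (t : Fin (n + 1))
    (hne : ∀ k, k ≤ t → L k ≠ L' k) :
    ∃ m : ℤ, L' t - L t = 2 * m ∧ 1 ≤ m := by
  induction t using Fin.induction with
  | zero => exact ⟨m0, h0, hm0⟩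
  | succ k ih =>
    obtain ⟨m, hm, hm1⟩ := ih fun x hx => hne x (hx.trans (Fin.castSucc_le_succ k))
    have hne' := hne k.succ le_rfl
    rcases walk_step hL k with s1 | s1 <;> rcases walk_step hL' k with s2 | s2
    · exact ⟨m, by omega, hm1⟩
    · exact ⟨m - 1, by omega, by omega⟩
    · exact ⟨m + 1, by omega, by omega⟩
    · exact ⟨m, by omega, hm1⟩

lemma meets_of_le {L L' : Fin (n + 1) → ℤ} (hL : IsWalk n L) (hL' : IsWalk n L')
    {m0 : ℤ} (h0 : L' 0 - L 0 = 2 * m0) (hm0 : 1 ≤ m0) (t : Fin (n + 1))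
    (hle : L' t - L t ≤ 0) : ∃ k, k ≤ t ∧ L k = L' k := by
  by_contra hc
  push_neg at hc
  obtain ⟨m, hm, hm1⟩ := diff_pos hL hL' h0 hm0 t hc
  omega

end aux

section main
variable {i j n : ℕ}

abbrev Tri (n : ℕ) := (Fin (n + 1) → ℤ) × (Fin (n + 1) → ℤ) × (Fin (n + 1) → ℤ)

/-- swap walks 1 and 2 after time `a` -/
def swAt (a : Fin (n + 1)) (T : Tri n) : Tri n :=
  (sw a T.1 T.2.1, sw a T.2.1 T.1, T.2.2)

/-- swap walks 2 and 3 after time `b` -/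
def swBt (b : Fin (n + 1)) (T : Tri n) : Tri n :=
  (T.1, sw b T.2.1 T.2.2, sw b T.2.2 T.2.1)

lemma swAt_swAt (a : Fin (n + 1)) (T : Tri n) : swAt a (swAt a T) = T := by
  simp only [swAt]
  exact Prod.ext_iff.mpr ⟨sw_sw a T.1 T.2.1, Prod.ext_iff.mpr ⟨sw_sw a T.2.1 T.1, rfl⟩⟩

lemma swBt_swBt (b : Fin (n + 1)) (T : Tri n) : swBt b (swBt b T) = T := by
  simp only [swBt]
  exact Prod.ext_iff.mpr ⟨rfl, Prod.ext_iff.mpr ⟨sw_sw b T.2.1 T.2.2, sw_sw b T.2.2 T.2.1⟩⟩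

lemma swAt_mem {T : Tri n} (hU : T ∈ USet i j n) (h12 : Meets T.2.1 T.1) :
    swAt (fm T.2.1 T.1 h12) T ∈ USet i j n := by
  obtain ⟨w1, w2, w3, s1, s2, s3⟩ := hU
  have ha := fm_eq T.2.1 T.1 h12
  exact ⟨sw_walk w1 w2 ha.symm, sw_walk w2 w1 ha, w3,
    by rw [show (swAt (fm T.2.1 T.1 h12) T).1 0 = T.1 0 from sw_zero (fm T.2.1 T.1 h12) T.1 T.2.1]; exact s1,
    by rw [show (swAt (fm T.2.1 T.1 h12) T).2.1 0 = T.2.1 0 from sw_zero (fm T.2.1 T.1 h12) T.2.1 T.1]; exact s2,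
    s3⟩

lemma swBt_mem {T : Tri n} (hU : T ∈ USet i j n) (h23 : Meets T.2.1 T.2.2) :
    swBt (fm T.2.1 T.2.2 h23) T ∈ USet i j n := by
  obtain ⟨w1, w2, w3, s1, s2, s3⟩ := hU
  have hb := fm_eq T.2.1 T.2.2 h23
  exact ⟨w1, sw_walk w2 w3 hb, sw_walk w3 w2 hb.symm, s1,
    by rw [show (swBt (fm T.2.1 T.2.2 h23) T).2.1 0 = T.2.1 0 from sw_zero (fm T.2.1 T.2.2 h23) T.2.1 T.2.2]; exact s2,
    by rw [show (swBt (fm T.2.1 T.2.2 h23) T).2.2 0 = T.2.2 0 from sw_zero (fm T.2.1 T.2.2 h23) T.2.2 T.2.1]; exact s3⟩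

lemma swAt_meets12 (T : Tri n) (h12 : Meets T.2.1 T.1) :
    Meets (swAt (fm T.2.1 T.1 h12) T).2.1 (swAt (fm T.2.1 T.1 h12) T).1 :=
  ⟨fm T.2.1 T.1 h12, by
    show sw _ T.2.1 T.1 _ = sw _ T.1 T.2.1 _
    rw [sw_of_le _ _ le_rfl, sw_of_le _ _ le_rfl]
    exact fm_eq _ _ h12⟩

lemma swBt_meets23 (T : Tri n) (h23 : Meets T.2.1 T.2.2) :
    Meets (swBt (fm T.2.1 T.2.2 h23) T).2.1 (swBt (fm T.2.1 T.2.2 h23) T).2.2 :=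
  ⟨fm T.2.1 T.2.2 h23, by
    show sw _ T.2.1 T.2.2 _ = sw _ T.2.2 T.2.1 _
    rw [sw_of_le _ _ le_rfl, sw_of_le _ _ le_rfl]
    exact fm_eq _ _ h23⟩

lemma fm_swAt (T : Tri n) (h12 : Meets T.2.1 T.1)
    (h' : Meets (swAt (fm T.2.1 T.1 h12) T).2.1 (swAt (fm T.2.1 T.1 h12) T).1) :
    fm _ _ h' = fm T.2.1 T.1 h12 := by
  apply fm_unique
  · show sw _ T.2.1 T.1 _ = sw _ T.1 T.2.1 _
    rw [sw_of_le _ _ le_rfl, sw_of_le _ _ le_rfl]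
    exact fm_eq _ _ h12
  · intro k hk
    show sw _ T.2.1 T.1 k ≠ sw _ T.1 T.2.1 k
    rw [sw_of_le _ _ hk.le, sw_of_le _ _ hk.le]
    exact fm_min _ _ h12 hk

lemma fm_swBt (T : Tri n) (h23 : Meets T.2.1 T.2.2)
    (h' : Meets (swBt (fm T.2.1 T.2.2 h23) T).2.1 (swBt (fm T.2.1 T.2.2 h23) T).2.2) :
    fm _ _ h' = fm T.2.1 T.2.2 h23 := by
  apply fm_unique
  · show sw _ T.2.1 T.2.2 _ = sw _ T.2.2 T.2.1 _
    rw [sw_of_le _ _ le_rfl, sw_of_le _ _ le_rfl]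
    exact fm_eq _ _ h23
  · intro k hk
    show sw _ T.2.1 T.2.2 k ≠ sw _ T.2.2 T.2.1 k
    rw [sw_of_le _ _ hk.le, sw_of_le _ _ hk.le]
    exact fm_min _ _ h23 hk

/-- every meeting of `L1,L3` is strictly after the first meeting of `L2,L1`,
provided `L2` never meets `L3`. -/
lemma meet13_gt_a {T : Tri n} (hU : T ∈ USet i j n) (hi : 1 ≤ i) (hj : 1 ≤ j)
    (h12 : Meets T.2.1 T.1) (h23 : ¬ Meets T.2.1 T.2.2)
    {k : Fin (n + 1)} (hk : T.1 k = T.2.2 k) : fm T.2.1 T.1 h12 < k := by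
  obtain ⟨w1, w2, w3, s1, s2, s3⟩ := hU
  by_contra hle
  push_neg at hle
  rcases hle.lt_or_eq with hlt | heq
  · have hne : ∀ x, x ≤ k → T.1 x ≠ T.2.1 x := fun x hx he =>
      fm_min T.2.1 T.1 h12 (lt_of_le_of_lt hx hlt) he.symm
    obtain ⟨m, hm, hm1⟩ := diff_pos w1 w2
      (by rw [s1, s2]; push_cast; ring) (by exact_mod_cast hi) k hne
    obtain ⟨x, _, hx⟩ := meets_of_le (m0 := (j:ℤ)) w2 w3
      (by rw [s2, s3]; push_cast; ring) (by exact_mod_cast hj) k (by omega)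
    exact h23 ⟨x, hx⟩
  · apply h23
    refine ⟨k, ?_⟩
    have e1 : T.2.1 k = T.1 k := by rw [heq]; exact fm_eq _ _ h12
    rw [e1, hk]

/-- every meeting of `L1,L3` is strictly after the first meeting of `L2,L3`,
provided `L2` never meets `L1`. -/
lemma meet13_gt_b {T : Tri n} (hU : T ∈ USet i j n) (hi : 1 ≤ i) (hj : 1 ≤ j)
    (h23 : Meets T.2.1 T.2.2) (h12 : ¬ Meets T.2.1 T.1)
    {k : Fin (n + 1)} (hk : T.1 k = T.2.2 k) : fm T.2.1 T.2.2 h23 < k := by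
  obtain ⟨w1, w2, w3, s1, s2, s3⟩ := hU
  by_contra hle
  push_neg at hle
  rcases hle.lt_or_eq with hlt | heq
  · have hne : ∀ x, x ≤ k → T.2.1 x ≠ T.2.2 x := fun x hx he =>
      fm_min T.2.1 T.2.2 h23 (lt_of_le_of_lt hx hlt) he
    obtain ⟨m, hm, hm1⟩ := diff_pos (m0 := (j:ℤ)) w2 w3
      (by rw [s2, s3]; push_cast; ring) (by exact_mod_cast hj) k hne
    obtain ⟨x, _, hx⟩ := meets_of_le w1 w2
      (by rw [s1, s2]; push_cast; ring) (by exact_mod_cast hi) k (by omega)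
    exact h12 ⟨x, hx.symm⟩
  · apply h12
    refine ⟨k, ?_⟩
    have e1 : T.2.1 k = T.2.2 k := by rw [heq]; exact fm_eq _ _ h23
    rw [e1, ← hk]

lemma not_both_fail {T : Tri n} (hU : T ∈ USet i j n) (hi : 1 ≤ i) (hj : 1 ≤ j)
    (h13 : Meets T.1 T.2.2) (h12 : ¬ Meets T.2.1 T.1) : Meets T.2.1 T.2.2 := by
  obtain ⟨w1, w2, w3, s1, s2, s3⟩ := hU
  obtain ⟨t, ht⟩ := h13
  by_contra h23
  have hne : ∀ x, x ≤ t → T.1 x ≠ T.2.1 x := fun x _ he => h12 ⟨x, he.symm⟩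
  obtain ⟨m, hm, hm1⟩ := diff_pos w1 w2
    (by rw [s1, s2]; push_cast; ring) (by exact_mod_cast hi) t hne
  obtain ⟨x, _, hx⟩ := meets_of_le (m0 := (j:ℤ)) w2 w3
    (by rw [s2, s3]; push_cast; ring) (by exact_mod_cast hj) t (by omega)
  exact h23 ⟨x, hx⟩

noncomputable def Fmap (T : Tri n) : Tri n :=
  if h12 : Meets T.2.1 T.1 then
    if h23 : Meets T.2.1 T.2.2 then
      if Meets T.1 T.2.2 then T
      else if fm T.2.1 T.1 h12 < fm T.2.1 T.2.2 h23 then swAt (fm T.2.1 T.1 h12) T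
      else swBt (fm T.2.1 T.2.2 h23) T
    else T
  else T

noncomputable def Gmap (T : Tri n) : Tri n :=
  if Meets T.1 T.2.2 then
    if h12 : Meets T.2.1 T.1 then
      if Meets T.2.1 T.2.2 then T else swAt (fm T.2.1 T.1 h12) T
    else if h23 : Meets T.2.1 T.2.2 then swBt (fm T.2.1 T.2.2 h23) T
    else T
  else T


lemma Fmap_mem {T : Tri n} (hT : T ∈ M1223Set i j n) : Fmap T ∈ M13Set i j n := by
  obtain ⟨hU, h12, h23⟩ := hT
  unfold Fmap
  rw [dif_pos h12, dif_pos h23]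
  by_cases h13 : Meets T.1 T.2.2
  · rw [if_pos h13]; exact ⟨hU, h13⟩
  · rw [if_neg h13]
    by_cases hab : fm T.2.1 T.1 h12 < fm T.2.1 T.2.2 h23
    · rw [if_pos hab]
      refine ⟨swAt_mem hU h12, ⟨fm T.2.1 T.2.2 h23, ?_⟩⟩
      show sw _ T.1 T.2.1 _ = T.2.2 _
      rw [sw_of_gt _ _ hab]
      exact fm_eq _ _ h23
    · rw [if_neg hab]
      have hba : fm T.2.1 T.2.2 h23 < fm T.2.1 T.1 h12 := by
        rcases (not_lt.mp hab).lt_or_eq with h | h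
        · exact h
        · exfalso; apply h13
          refine ⟨fm T.2.1 T.1 h12, ?_⟩
          have e1 : T.1 (fm T.2.1 T.1 h12) = T.2.1 (fm T.2.1 T.1 h12) :=
            (fm_eq _ _ h12).symm
          have e2 : T.2.1 (fm T.2.1 T.2.2 h23) = T.2.2 (fm T.2.1 T.2.2 h23) :=
            fm_eq _ _ h23
          rw [← h] at e1
          rw [← h, e1, e2]
      refine ⟨swBt_mem hU h23, ⟨fm T.2.1 T.1 h12, ?_⟩⟩
      show T.1 _ = sw _ T.2.2 T.2.1 _
      rw [sw_of_gt _ _ hba]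
      exact (fm_eq _ _ h12).symm

lemma Gmap_mem (hi : 1 ≤ i) (hj : 1 ≤ j) {T : Tri n} (hT : T ∈ M13Set i j n) :
    Gmap T ∈ M1223Set i j n := by
  obtain ⟨hU, h13⟩ := hT
  unfold Gmap
  rw [if_pos h13]
  by_cases h12 : Meets T.2.1 T.1
  · rw [dif_pos h12]
    by_cases h23 : Meets T.2.1 T.2.2
    · rw [if_pos h23]; exact ⟨hU, h12, h23⟩
    · rw [if_neg h23]
      refine ⟨swAt_mem hU h12, swAt_meets12 T h12, ?_⟩
      obtain ⟨t0, ht0⟩ := h13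
      refine ⟨t0, ?_⟩
      show sw _ T.2.1 T.1 t0 = T.2.2 t0
      rw [sw_of_gt _ _ (meet13_gt_a hU hi hj h12 h23 ht0)]
      exact ht0
  · rw [dif_neg h12]
    have h23 : Meets T.2.1 T.2.2 := not_both_fail hU hi hj h13 h12
    rw [dif_pos h23]
    refine ⟨swBt_mem hU h23, ?_, swBt_meets23 T h23⟩
    obtain ⟨t0, ht0⟩ := h13
    refine ⟨t0, ?_⟩
    show sw _ T.2.1 T.2.2 t0 = T.1 t0
    rw [sw_of_gt _ _ (meet13_gt_b hU hi hj h23 h12 ht0)]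
    exact ht0.symm

lemma GF_id {T : Tri n} (hT : T ∈ M1223Set i j n) : Gmap (Fmap T) = T := by
  obtain ⟨hU, h12, h23⟩ := hT
  unfold Fmap
  rw [dif_pos h12, dif_pos h23]
  by_cases h13 : Meets T.1 T.2.2
  · rw [if_pos h13]
    unfold Gmap
    rw [if_pos h13, dif_pos h12, if_pos h23]
  · rw [if_neg h13]
    by_cases hab : fm T.2.1 T.1 h12 < fm T.2.1 T.2.2 h23
    · rw [if_pos hab]
      have f13 : Meets (swAt (fm T.2.1 T.1 h12) T).1 (swAt (fm T.2.1 T.1 h12) T).2.2 := by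
        refine ⟨fm T.2.1 T.2.2 h23, ?_⟩
        show sw _ T.1 T.2.1 _ = T.2.2 _
        rw [sw_of_gt _ _ hab]; exact fm_eq _ _ h23
      have f12 : Meets (swAt (fm T.2.1 T.1 h12) T).2.1 (swAt (fm T.2.1 T.1 h12) T).1 :=
        swAt_meets12 T h12
      have f23 : ¬ Meets (swAt (fm T.2.1 T.1 h12) T).2.1 (swAt (fm T.2.1 T.1 h12) T).2.2 := by
        rintro ⟨k, hk⟩
        by_cases hka : k ≤ fm T.2.1 T.1 h12
        · rw [show (swAt (fm T.2.1 T.1 h12) T).2.1 k = T.2.1 k from sw_of_le _ _ hka] at hk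
          exact absurd (fm_le T.2.1 T.2.2 h23 hk) (not_le.mpr (lt_of_le_of_lt hka hab))
        · push_neg at hka
          rw [show (swAt (fm T.2.1 T.1 h12) T).2.1 k = T.1 k from sw_of_gt _ _ hka] at hk
          exact h13 ⟨k, hk⟩
      unfold Gmap
      rw [if_pos f13, dif_pos f12, if_neg f23, fm_swAt T h12 f12]
      exact swAt_swAt _ T
    · rw [if_neg hab]
      have hba : fm T.2.1 T.2.2 h23 < fm T.2.1 T.1 h12 := by
        rcases (not_lt.mp hab).lt_or_eq with h | h
        · exact h
        · exfalso; apply h13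
          refine ⟨fm T.2.1 T.1 h12, ?_⟩
          have e1 : T.1 (fm T.2.1 T.1 h12) = T.2.1 (fm T.2.1 T.1 h12) :=
            (fm_eq _ _ h12).symm
          have e2 : T.2.1 (fm T.2.1 T.2.2 h23) = T.2.2 (fm T.2.1 T.2.2 h23) :=
            fm_eq _ _ h23
          rw [← h] at e1
          rw [← h, e1, e2]
      have f13 : Meets (swBt (fm T.2.1 T.2.2 h23) T).1 (swBt (fm T.2.1 T.2.2 h23) T).2.2 := by
        refine ⟨fm T.2.1 T.1 h12, ?_⟩
        show T.1 _ = sw _ T.2.2 T.2.1 _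
        rw [sw_of_gt _ _ hba]; exact (fm_eq _ _ h12).symm
      have f12 : ¬ Meets (swBt (fm T.2.1 T.2.2 h23) T).2.1 (swBt (fm T.2.1 T.2.2 h23) T).1 := by
        rintro ⟨k, hk⟩
        by_cases hkb : k ≤ fm T.2.1 T.2.2 h23
        · rw [show (swBt (fm T.2.1 T.2.2 h23) T).2.1 k = T.2.1 k from sw_of_le _ _ hkb] at hk
          exact absurd (fm_le T.2.1 T.1 h12 hk) (not_le.mpr (lt_of_le_of_lt hkb hba))
        · push_neg at hkb
          rw [show (swBt (fm T.2.1 T.2.2 h23) T).2.1 k = T.2.2 k from sw_of_gt _ _ hkb] at hk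
          exact h13 ⟨k, hk.symm⟩
      have f23 : Meets (swBt (fm T.2.1 T.2.2 h23) T).2.1 (swBt (fm T.2.1 T.2.2 h23) T).2.2 :=
        swBt_meets23 T h23
      unfold Gmap
      rw [if_pos f13, dif_neg f12, dif_pos f23, fm_swBt T h23 f23]
      exact swBt_swBt _ T

lemma FG_id (hi : 1 ≤ i) (hj : 1 ≤ j) {T : Tri n} (hT : T ∈ M13Set i j n) :
    Fmap (Gmap T) = T := by
  obtain ⟨hU, h13⟩ := hT
  unfold Gmap
  rw [if_pos h13]
  by_cases h12 : Meets T.2.1 T.1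
  · rw [dif_pos h12]
    by_cases h23 : Meets T.2.1 T.2.2
    · rw [if_pos h23]
      unfold Fmap
      rw [dif_pos h12, dif_pos h23, if_pos h13]
    · rw [if_neg h23]
      have hgt : ∀ k, T.1 k = T.2.2 k → fm T.2.1 T.1 h12 < k := fun k hk =>
        meet13_gt_a hU hi hj h12 h23 hk
      have g12 : Meets (swAt (fm T.2.1 T.1 h12) T).2.1 (swAt (fm T.2.1 T.1 h12) T).1 :=
        swAt_meets12 T h12
      have g23 : Meets (swAt (fm T.2.1 T.1 h12) T).2.1 (swAt (fm T.2.1 T.1 h12) T).2.2 := by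
        obtain ⟨t0, ht0⟩ := h13
        refine ⟨t0, ?_⟩
        show sw _ T.2.1 T.1 t0 = T.2.2 t0
        rw [sw_of_gt _ _ (hgt t0 ht0)]; exact ht0
      have g13 : ¬ Meets (swAt (fm T.2.1 T.1 h12) T).1 (swAt (fm T.2.1 T.1 h12) T).2.2 := by
        rintro ⟨k, hk⟩
        by_cases hka : k ≤ fm T.2.1 T.1 h12
        · rw [show (swAt (fm T.2.1 T.1 h12) T).1 k = T.1 k from sw_of_le _ _ hka] at hk
          exact absurd (hgt k hk) (not_lt.mpr hka)
        · push_neg at hka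
          rw [show (swAt (fm T.2.1 T.1 h12) T).1 k = T.2.1 k from sw_of_gt _ _ hka] at hk
          exact h23 ⟨k, hk⟩
      have hfmlt : fm _ _ g12 < fm _ _ g23 := by
        rw [fm_swAt T h12 g12]
        by_contra hle
        push_neg at hle
        have hmeet := fm_eq _ _ g23
        rw [show (swAt (fm T.2.1 T.1 h12) T).2.1 (fm _ _ g23) = T.2.1 (fm _ _ g23) from
          sw_of_le _ _ hle] at hmeet
        exact h23 ⟨_, hmeet⟩
      unfold Fmap
      rw [dif_pos g12, dif_pos g23, if_neg g13, if_pos hfmlt, fm_swAt T h12 g12]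
      exact swAt_swAt _ T
  · rw [dif_neg h12]
    have h23 : Meets T.2.1 T.2.2 := not_both_fail hU hi hj h13 h12
    rw [dif_pos h23]
    have hgt : ∀ k, T.1 k = T.2.2 k → fm T.2.1 T.2.2 h23 < k := fun k hk =>
      meet13_gt_b hU hi hj h23 h12 hk
    have g12 : Meets (swBt (fm T.2.1 T.2.2 h23) T).2.1 (swBt (fm T.2.1 T.2.2 h23) T).1 := by
      obtain ⟨t0, ht0⟩ := h13
      refine ⟨t0, ?_⟩
      show sw _ T.2.1 T.2.2 t0 = T.1 t0
      rw [sw_of_gt _ _ (hgt t0 ht0)]; exact ht0.symm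
    have g23 : Meets (swBt (fm T.2.1 T.2.2 h23) T).2.1 (swBt (fm T.2.1 T.2.2 h23) T).2.2 :=
      swBt_meets23 T h23
    have g13 : ¬ Meets (swBt (fm T.2.1 T.2.2 h23) T).1 (swBt (fm T.2.1 T.2.2 h23) T).2.2 := by
      rintro ⟨k, hk⟩
      by_cases hkb : k ≤ fm T.2.1 T.2.2 h23
      · rw [show (swBt (fm T.2.1 T.2.2 h23) T).2.2 k = T.2.2 k from sw_of_le _ _ hkb] at hk
        exact absurd (hgt k hk) (not_lt.mpr hkb)
      · push_neg at hkb
        rw [show (swBt (fm T.2.1 T.2.2 h23) T).2.2 k = T.2.1 k from sw_of_gt _ _ hkb] at hk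
        exact h12 ⟨k, hk.symm⟩
    have hnlt : ¬ fm _ _ g12 < fm _ _ g23 := by
      rw [fm_swBt T h23 g23]
      push_neg
      by_contra hlt
      push_neg at hlt
      have hmeet := fm_eq _ _ g12
      rw [show (swBt (fm T.2.1 T.2.2 h23) T).2.1 (fm _ _ g12) = T.2.1 (fm _ _ g12) from
        sw_of_le _ _ hlt.le] at hmeet
      exact h12 ⟨_, hmeet⟩
    unfold Fmap
    rw [dif_pos g12, dif_pos g23, if_neg g13, if_neg hnlt, fm_swBt T h23 g23]
    exact swBt_swBt _ T

end main


theorem stmt7 (i j n : ℕ) (hi : 1 ≤ i) (hj : 1 ≤ j) (hn : 1 ≤ n) :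
    Nonempty (M1223Set i j n ≃ M13Set i j n) := by
  exact ⟨{
    toFun := fun T => ⟨Fmap T.1, Fmap_mem T.2⟩
    invFun := fun T => ⟨Gmap T.1, Gmap_mem hi hj T.2⟩
    left_inv := fun T => Subtype.ext (GF_id T.2)
    right_inv := fun T => Subtype.ext (FG_id hi hj T.2) }⟩
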